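/- There exist a constant C > 0 and ε₀ ∈ (0, 1/2) such that for all ε, δ ∈ (0, ε₀) with ε + δ < 1: | (−δ·log₂ δ − ε·log₂ ε − (1−ε−δ)·log₂(1−ε−δ)) − H(δ) − H(ε) + (log₂ e)·ε·δ | ≤ C·max(ε,δ)³. That is, the ternary entropy of the distribution (ε, δ, 1−ε−δ) equals H(δ) + H(ε) − (log₂ e)·εδ up to an error of order max(ε,δ)³. -/

import Mathlib

/-- The binary entropy function, with base-2 logarithms. -/
noncomputable def binEnt (p : ℝ) : ℝ :=
  -(p * Real.logb 2 p) - (1 - p) * Real.logb 2 (1 - p)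



noncomputable def hAux (x : ℝ) : ℝ := (1 - x) * Real.log (1 - x) + x - x ^ 2 / 2

lemma hAux_hasDerivAt {t : ℝ} (ht : t < 1) :
    HasDerivAt hAux (-Real.log (1 - t) - t) t := by
  have h1 : HasDerivAt (fun x : ℝ => 1 - x) (-1) t := by
    simpa using (hasDerivAt_id t).const_sub 1
  have hlog : HasDerivAt (fun x : ℝ => Real.log (1 - x)) (-1 / (1 - t)) t := by
    have := (Real.hasDerivAt_log (by linarith : (1:ℝ) - t ≠ 0)).comp t h1
    exact this.congr_deriv (by ring)
  have hmul : HasDerivAt (fun x : ℝ => (1 - x) * Real.log (1 - x))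
      ((-1) * Real.log (1 - t) + (1 - t) * (-1 / (1 - t))) t := h1.mul hlog
  have hsq : HasDerivAt (fun x : ℝ => x ^ 2 / 2) t t := by
    simpa using (hasDerivAt_pow 2 t).div_const 2
  have := (hmul.add (hasDerivAt_id t)).sub hsq
  refine this.congr_deriv ?_
  have h0 : (1:ℝ) - t ≠ 0 := by linarith
  have h2 : (1 - t) * (-1 / (1 - t)) = -1 := by
    rw [mul_div_assoc', mul_neg_one, neg_div, div_self h0]
  linear_combination h2

lemma hAux_abs_le {x : ℝ} (hx0 : 0 ≤ x) (hx : x ≤ 1/2) : |hAux x| ≤ 2 * x ^ 3 := by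
  have key : ∀ t ∈ Set.Icc (0:ℝ) x, ‖-Real.log (1 - t) - t‖ ≤ 2 * x ^ 2 := by
    intro t ⟨ht0, htx⟩
    have ht1 : t ≤ 1/2 := le_trans htx hx
    have h1t : (0:ℝ) < 1 - t := by linarith
    have hlow : Real.log (1 - t) ≤ -t := by
      have := Real.log_le_sub_one_of_pos h1t
      linarith
    have hup : -Real.log (1 - t) ≤ t / (1 - t) := by
      have h2 : Real.log (1 - t)⁻¹ ≤ (1 - t)⁻¹ - 1 :=
        Real.log_le_sub_one_of_pos (by positivity)
      rw [Real.log_inv] at h2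
      have : (1 - t)⁻¹ - 1 = t / (1 - t) := by field_simp; ring
      linarith [this ▸ h2]
    have hfrac : t / (1 - t) ≤ t + 2 * t ^ 2 := by
      rw [div_le_iff₀ h1t]; nlinarith
    rw [Real.norm_eq_abs, abs_le]
    constructor
    · nlinarith
    · nlinarith
  have hder : ∀ t ∈ Set.Icc (0:ℝ) x, HasDerivWithinAt hAux (-Real.log (1 - t) - t)
      (Set.Icc (0:ℝ) x) t := by
    intro t ⟨ht0, htx⟩
    exact (hAux_hasDerivAt (by linarith : t < 1)).hasDerivWithinAt
  have := Convex.norm_image_sub_le_of_norm_hasDerivWithin_le hder key (convex_Icc 0 x)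
    (Set.left_mem_Icc.2 hx0) (Set.right_mem_Icc.2 hx0)
  have h0 : hAux 0 = 0 := by simp [hAux]
  rw [h0, sub_zero, sub_zero, Real.norm_eq_abs, Real.norm_eq_abs, abs_of_nonneg hx0] at this
  calc |hAux x| ≤ 2 * x ^ 2 * x := this
    _ = 2 * x ^ 3 := by ring

/-- Taylor-expansion identity of Lemma 3: the ternary entropy of `(ε, δ, 1−ε−δ)`
equals `H(δ) + H(ε) − (log₂ e)·εδ` up to an error of order `max(ε,δ)³`. -/
theorem ternary_entropy_expansion :
    ∃ C : ℝ, 0 < C ∧ ∃ ε₀ : ℝ, ε₀ ∈ Set.Ioo (0 : ℝ) (1 / 2) ∧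
      ∀ ε δ : ℝ, ε ∈ Set.Ioo 0 ε₀ → δ ∈ Set.Ioo 0 ε₀ → ε + δ < 1 →
        |(-(δ * Real.logb 2 δ) - ε * Real.logb 2 ε -
            (1 - ε - δ) * Real.logb 2 (1 - ε - δ))
          - binEnt δ - binEnt ε + Real.logb 2 (Real.exp 1) * ε * δ| ≤
          C * max ε δ ^ 3 := by
  have hlog2 : (0:ℝ) < Real.log 2 := Real.log_pos (by norm_num)
  refine ⟨20 / Real.log 2, by positivity, 1/4, ⟨by norm_num, by norm_num⟩, ?_⟩
  rintro ε δ ⟨hε0, hε⟩ ⟨hδ0, hδ⟩ _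
  have key : (-(δ * Real.logb 2 δ) - ε * Real.logb 2 ε -
        (1 - ε - δ) * Real.logb 2 (1 - ε - δ))
      - binEnt δ - binEnt ε + Real.logb 2 (Real.exp 1) * ε * δ
      = (hAux δ + hAux ε - hAux (ε + δ)) / Real.log 2 := by
    simp only [binEnt, Real.logb, Real.log_exp, hAux]
    field_simp
    ring
  rw [key, abs_div, abs_of_pos hlog2]
  have h1 : |hAux δ| ≤ 2 * δ ^ 3 := hAux_abs_le hδ0.le (by linarith)
  have h2 : |hAux ε| ≤ 2 * ε ^ 3 := hAux_abs_le hε0.le (by linarith)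
  have h3 : |hAux (ε + δ)| ≤ 2 * (ε + δ) ^ 3 :=
    hAux_abs_le (by linarith) (by linarith)
  have htri : |hAux δ + hAux ε - hAux (ε + δ)| ≤
      |hAux δ| + |hAux ε| + |hAux (ε + δ)| := by
    calc |hAux δ + hAux ε - hAux (ε + δ)| ≤ |hAux δ + hAux ε| + |hAux (ε + δ)| :=
          abs_sub _ _
      _ ≤ |hAux δ| + |hAux ε| + |hAux (ε + δ)| := by
          exact add_le_add_left (abs_add_le (hAux δ) (hAux ε)) _
  have hm : 2 * δ ^ 3 + 2 * ε ^ 3 + 2 * (ε + δ) ^ 3 ≤ 20 * max ε δ ^ 3 := by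
    have h4 : ε ≤ max ε δ := le_max_left _ _
    have h5 : δ ≤ max ε δ := le_max_right _ _
    nlinarith [hε0.le, hδ0.le, pow_le_pow_left₀ hε0.le h4 3, pow_le_pow_left₀ hδ0.le h5 3,
      sq_nonneg (ε - δ), sq_nonneg (ε + δ)]
  rw [div_le_iff₀ hlog2]
  calc |hAux δ + hAux ε - hAux (ε + δ)| ≤ 20 * max ε δ ^ 3 := by linarith
    _ = 20 / Real.log 2 * max ε δ ^ 3 * Real.log 2 := by field_simp
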